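/- If an optimal solution x_OPT of the sparse max-plus problem (minimize |supp(x)| subject to ‖b - A⊞x‖_p^p ≤ ε and A⊞x ≤ b) exists, then the vector z defined by z_j = x̂_j for j ∈ supp(x_OPT) and z_j = -∞ otherwise is also an optimal solution. -/

import Mathlib

/-- Max-plus matrix-vector product over `ℝ_max = WithBot ℝ`:
`[A ⊞ x]_i = max_k (a_{ik} + x_k)` with `a + (-∞) = -∞`. -/
noncomputable def maxPlus {m n : ℕ} (A : Fin m → Fin n → ℝ) (x : Fin n → WithBot ℝ)
    (i : Fin m) : WithBot ℝ :=
  Finset.univ.sup fun k => (A i k : WithBot ℝ) + x k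

/-- The principal solution `x̂_j = min_i (b_i - a_{ij})`. -/
noncomputable def principalSol {m n : ℕ} (A : Fin (m + 1) → Fin n → ℝ)
    (b : Fin (m + 1) → ℝ) (j : Fin n) : ℝ :=
  Finset.univ.inf' Finset.univ_nonempty fun i => b i - A i j

/-- If `x_OPT` is an optimal solution of the sparse problem, then replacing its
finite values by those of the principal solution gives another optimal solution. -/
theorem principal_values_optimal (m n : ℕ) (A : Fin (m + 1) → Fin (n + 1) → ℝ)
    (b : Fin (m + 1) → ℝ) (p : ℝ) (hp : 1 ≤ p) (ε : ℝ) (hε : 0 ≤ ε)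
    (xOPT : Fin (n + 1) → WithBot ℝ)
    (hfeas : (∀ i, maxPlus A xOPT i ≤ (b i : WithBot ℝ)) ∧
      ∑ i, (b i - WithBot.unbotD 0 (maxPlus A xOPT i)) ^ p ≤ ε)
    (hopt : ∀ y : Fin (n + 1) → WithBot ℝ,
      ((∀ i, maxPlus A y i ≤ (b i : WithBot ℝ)) ∧
        ∑ i, (b i - WithBot.unbotD 0 (maxPlus A y i)) ^ p ≤ ε) →
      Set.ncard {j | xOPT j ≠ ⊥} ≤ Set.ncard {j | y j ≠ ⊥}) :
    ((∀ i, maxPlus A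
        (fun j => if xOPT j ≠ ⊥ then ((principalSol A b j : ℝ) : WithBot ℝ) else ⊥) i
        ≤ (b i : WithBot ℝ)) ∧
      ∑ i, (b i - WithBot.unbotD 0 (maxPlus A
        (fun j => if xOPT j ≠ ⊥ then ((principalSol A b j : ℝ) : WithBot ℝ) else ⊥) i)) ^ p
        ≤ ε) ∧
    ∀ y : Fin (n + 1) → WithBot ℝ,
      ((∀ i, maxPlus A y i ≤ (b i : WithBot ℝ)) ∧
        ∑ i, (b i - WithBot.unbotD 0 (maxPlus A y i)) ^ p ≤ ε) →
      Set.ncard {j | (fun j => if xOPT j ≠ ⊥ then ((principalSol A b j : ℝ) : WithBot ℝ) else ⊥) j ≠ ⊥}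
        ≤ Set.ncard {j | y j ≠ ⊥} := by
  obtain ⟨hf1, hf2⟩ := hfeas
  set z : Fin (n + 1) → WithBot ℝ :=
    fun j => if xOPT j ≠ ⊥ then ((principalSol A b j : ℝ) : WithBot ℝ) else ⊥ with hzdef
  -- xOPT ≤ z pointwise
  have hle : ∀ j, xOPT j ≤ z j := by
    intro j
    by_cases h : xOPT j = ⊥
    · simp [hzdef, h]
    · obtain ⟨x, hx⟩ := WithBot.ne_bot_iff_exists.mp h
      simp only [hzdef, h, ne_eq, not_false_eq_true, if_true]
      rw [← hx, WithBot.coe_le_coe]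
      apply Finset.le_inf'
      intro i _
      have h2 : (A i j : WithBot ℝ) + xOPT j ≤ (b i : WithBot ℝ) :=
        le_trans (Finset.le_sup (f := fun k => (A i k : WithBot ℝ) + xOPT k)
          (Finset.mem_univ j)) (hf1 i)
      rw [← hx, ← WithBot.coe_add, WithBot.coe_le_coe] at h2
      linarith
  -- feasibility of z (first constraint)
  have hzb : ∀ i, maxPlus A z i ≤ (b i : WithBot ℝ) := by
    intro i
    rw [maxPlus]
    apply Finset.sup_le
    intro k _
    by_cases h : xOPT k = ⊥
    · simp [hzdef, h]
    · simp only [hzdef, h, ne_eq, not_false_eq_true, if_true]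
      rw [← WithBot.coe_add, WithBot.coe_le_coe]
      have := Finset.inf'_le (b := i) (fun i => b i - A i k) (Finset.mem_univ i)
      unfold principalSol
      linarith [this]
  -- monotonicity
  have hmono : ∀ i, maxPlus A xOPT i ≤ maxPlus A z i := by
    intro i
    rw [maxPlus, maxPlus]
    apply Finset.sup_mono_fun
    intro k _
    exact add_le_add_right (hle k) _
  -- bot case transfer
  have hbot : ∀ i, maxPlus A xOPT i = ⊥ → maxPlus A z i = ⊥ := by
    intro i h
    rw [maxPlus, Finset.sup_eq_bot_iff] at h ⊢
    intro k hk
    have := h k hk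
    rcases WithBot.add_eq_bot.mp this with h' | h'
    · exact absurd h' (WithBot.coe_ne_bot)
    · simp [hzdef, h']
  -- residual comparison
  have hres : ∀ i, (b i - WithBot.unbotD 0 (maxPlus A z i)) ^ p
      ≤ (b i - WithBot.unbotD 0 (maxPlus A xOPT i)) ^ p := by
    intro i
    by_cases h : maxPlus A xOPT i = ⊥
    · rw [h, hbot i h]
    · have hz_ne : maxPlus A z i ≠ ⊥ := by
        intro hb
        exact h (le_bot_iff.mp (hb ▸ hmono i))
      obtain ⟨u, hu⟩ := WithBot.ne_bot_iff_exists.mp h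
      obtain ⟨v, hv⟩ := WithBot.ne_bot_iff_exists.mp hz_ne
      have huv : u ≤ v := WithBot.coe_le_coe.mp (by rw [hu, hv]; exact hmono i)
      have hvb : v ≤ b i := WithBot.coe_le_coe.mp (by rw [hv]; exact hzb i)
      rw [← hu, ← hv]
      simp only [WithBot.unbotD_coe]
      exact Real.rpow_le_rpow (by linarith) (by linarith) (by linarith)
  have hfeasz : (∀ i, maxPlus A z i ≤ (b i : WithBot ℝ)) ∧
      ∑ i, (b i - WithBot.unbotD 0 (maxPlus A z i)) ^ p ≤ ε :=
    ⟨hzb, le_trans (Finset.sum_le_sum fun i _ => hres i) hf2⟩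
  refine ⟨hfeasz, ?_⟩
  intro y hy
  have hset : {j | z j ≠ ⊥} = {j | xOPT j ≠ ⊥} := by
    ext j
    by_cases h : xOPT j = ⊥ <;> simp [hzdef, h]
  calc Set.ncard {j | z j ≠ ⊥} = Set.ncard {j | xOPT j ≠ ⊥} := by rw [hset]
    _ ≤ Set.ncard {j | y j ≠ ⊥} := hopt y hy
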